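/- For every n ≥ 1, every n-path-universal word (a word over alphabet [n] containing as subwords all words induced by paths of the n-dimensional hypercube) has length at least n·2^(n-1). -/

import Mathlib

/-- One asynchronous update step: replace coordinate `i` of `x` by `f x i`. -/
def updateStep {n : ℕ} (f : (Fin n → Bool) → (Fin n → Bool)) (x : Fin n → Bool)
    (i : Fin n) : Fin n → Bool :=
  Function.update x i (f x i)

/-- Action of a word on a state. -/
def applyWord {n : ℕ} (f : (Fin n → Bool) → (Fin n → Bool)) :
    List (Fin n) → (Fin n → Bool) → (Fin n → Bool)
  | [], x => x
  | i :: w, x => applyWord f w (updateStep f x i)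

/-- A word `w` fixes `f` if applying it to any state yields a fixed point of `f`. -/
def Fixes {n : ℕ} (f : (Fin n → Bool) → (Fin n → Bool)) (w : List (Fin n)) : Prop :=
  ∀ x, f (applyWord f w x) = applyWord f w x

/-- Arc of the asynchronous graph. -/
def AsyncArc {n : ℕ} (f : (Fin n → Bool) → (Fin n → Bool))
    (x y : Fin n → Bool) : Prop :=
  ∃ i : Fin n, f x i ≠ x i ∧ y = Function.update x i (f x i)

/-- `w` is induced by a path of the `n`-cube. -/
def IsPathWord (n : ℕ) (w : List (Fin n)) : Prop :=
  ∃ xs : List (Fin n → Bool), xs.Nodup ∧ xs.length = w.length + 1 ∧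
    ∀ k (hk : k < w.length),
      xs.getD (k + 1) default =
        Function.update (xs.getD k default) (w.get ⟨k, hk⟩)
          (!(xs.getD k default (w.get ⟨k, hk⟩)))

/-- `W` contains every `n`-path-word as a subword. -/
def PathUniversal (n : ℕ) (W : List (Fin n)) : Prop :=
  ∀ w : List (Fin n), IsPathWord n w → w.Sublist W


namespace PathLB

/-- `Steps xs w`: `xs` is a walk whose consecutive states differ by flipping
the letters of `w` in order. -/
def Steps {α : Type*} [DecidableEq α] : List (α → Bool) → List α → Prop
  | [_], [] => True
  | x :: y :: xs, i :: w => y = Function.update x i (!(x i)) ∧ Steps (y :: xs) w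
  | _, _ => False

theorem steps_length {α : Type*} [DecidableEq α] :
    ∀ {xs : List (α → Bool)} {w : List α}, Steps xs w → xs.length = w.length + 1
  | [_], [], _ => rfl
  | x :: y :: xs, i :: w, h => by
    have := steps_length (xs := y :: xs) (w := w) h.2
    simp [List.length_cons] at this ⊢; omega
  | [], [], h => h.elim
  | [], _ :: _, h => h.elim
  | [_], _ :: _, h => h.elim
  | _ :: _ :: _, [], h => h.elim

theorem steps_getD {n : ℕ} :
    ∀ {xs : List (Fin n → Bool)} {w : List (Fin n)}, Steps xs w →
      ∀ k (hk : k < w.length),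
        xs.getD (k + 1) default =
          Function.update (xs.getD k default) (w.get ⟨k, hk⟩)
            (!(xs.getD k default (w.get ⟨k, hk⟩)))
  | x :: y :: xs, i :: w, h => by
    intro k hk
    cases k with
    | zero => simpa using h.1
    | succ k =>
      have := steps_getD h.2 k (by simpa using hk)
      simpa using this
  | [], [], h => h.elim
  | [], _ :: _, h => h.elim
  | [_], _ :: _, h => h.elim
  | [_], [], _ => by intro k hk; simp at hk
  | _ :: _ :: _, [], h => h.elim

theorem isPathWord_of {n : ℕ} {xs : List (Fin n → Bool)} {w : List (Fin n)}
    (h : Steps xs w) (nd : xs.Nodup) : IsPathWord n w :=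
  ⟨xs, nd, steps_length h, steps_getD h⟩

end PathLB
namespace PathLB
variable {α : Type*} [DecidableEq α]

theorem flip_symm {x y : α → Bool} {i : α}
    (h : y = Function.update x i (!(x i))) : x = Function.update y i (!(y i)) := by
  subst h
  funext j
  rcases eq_or_ne j i with rfl | hj <;> simp [Function.update_apply, *]

theorem steps_ne_nil {xs : List (α → Bool)} {w : List α} (h : Steps xs w) : xs ≠ [] := by
  have := steps_length h; intro h'; subst h'; simp at this

theorem steps_append :
    ∀ {xs ys : List (α → Bool)} {w v : List α} {a b : α → Bool} {i : α},
      Steps xs w → Steps ys v → xs.getLast? = some a → ys.head? = some b →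
      b = Function.update a i (!(a i)) → Steps (xs ++ ys) (w ++ i :: v)
  | [x], ys, [], v, a, b, i, _, h2, hl, hh, hb => by
    obtain ⟨c, t, rfl⟩ : ∃ c t, ys = c :: t := by
      cases ys with
      | nil => exact absurd rfl (steps_ne_nil h2)
      | cons c t => exact ⟨c, t, rfl⟩
    simp only [List.getLast?_singleton, Option.some.injEq] at hl
    simp only [List.head?_cons, Option.some.injEq] at hh
    subst hl hh
    exact ⟨hb, h2⟩
  | x :: y :: xs, ys, j :: w, v, a, b, i, h1, h2, hl, hh, hb => by
    refine ⟨h1.1, ?_⟩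
    exact steps_append h1.2 h2 (by rw [← hl]; simp) hh hb
  | [], _, [], _, _, _, _, h, _, _, _, _ => h.elim
  | [], _, _ :: _, _, _, _, _, h, _, _, _, _ => h.elim
  | [_], _, _ :: _, _, _, _, _, h, _, _, _, _ => h.elim
  | _ :: _ :: _, _, [], _, _, _, _, h, _, _, _, _ => h.elim

theorem steps_reverse :
    ∀ {xs : List (α → Bool)} {w : List α},
      Steps xs w → Steps xs.reverse w.reverse
  | [x], [], h => h
  | x :: y :: xs, i :: w, h => by
    have ih := steps_reverse h.2
    have : (x :: y :: xs).reverse = (y :: xs).reverse ++ [x] := by simp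
    rw [this]
    have hw : (i :: w).reverse = w.reverse ++ i :: [] := by simp
    rw [hw]
    refine steps_append ih (by trivial) ?_ rfl (flip_symm h.1)
    simp
  | [], [], h => h.elim
  | [], _ :: _, h => h.elim
  | [_], _ :: _, h => h.elim
  | _ :: _ :: _, [], h => h.elim

theorem steps_map {β : Type*} [DecidableEq β] (F : (α → Bool) → (β → Bool)) (g : α → β) :
    ∀ {xs : List (α → Bool)} {w : List α},
      Steps xs w →
      (∀ (x : α → Bool) i, i ∈ w →
        F (Function.update x i (!(x i))) = Function.update (F x) (g i) (!(F x (g i)))) →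
      Steps (xs.map F) (w.map g)
  | [x], [], _, _ => trivial
  | x :: y :: xs, i :: w, h, hc => by
    refine ⟨?_, steps_map F g h.2 fun x j hj => hc x j (List.mem_cons_of_mem _ hj)⟩
    rw [h.1, hc x i List.mem_cons_self]
  | [], [], h, _ => h.elim
  | [], _ :: _, h, _ => h.elim
  | [_], _ :: _, h, _ => h.elim
  | _ :: _ :: _, [], h, _ => h.elim

end PathLB

namespace PathLB

/-- Reflected Gray code list of states (over `ℕ → Bool`, support in `[0,m)`). -/
def gl : ℕ → List (ℕ → Bool)
  | 0 => [fun _ => false]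
  | m + 1 => gl m ++ ((gl m).reverse.map (fun x => Function.update x m true))

/-- The induced word of the reflected Gray code. -/
def gw : ℕ → List ℕ
  | 0 => []
  | m + 1 => gw m ++ m :: (gw m).reverse

theorem gl_length (m : ℕ) : (gl m).length = 2 ^ m := by
  induction m with
  | zero => rfl
  | succ m ih => rw [gl, List.length_append, List.length_map, List.length_reverse, ih,
      pow_succ]; omega

theorem gl_ne_nil (m : ℕ) : gl m ≠ [] := by
  intro h
  have h1 := gl_length m
  rw [h] at h1
  have h2 : 0 < 2 ^ m := Nat.pow_pos (by norm_num)
  simp at h1; omega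

theorem gl_head (m : ℕ) : (gl m).head? = some (fun _ => false) := by
  induction m with
  | zero => rfl
  | succ m ih => rw [gl, List.head?_append_of_ne_nil _ (gl_ne_nil m)]; exact ih

theorem gl_support {m : ℕ} : ∀ x ∈ gl m, ∀ j, m ≤ j → x j = false := by
  induction m with
  | zero => intro x hx j _; simp [gl] at hx; subst hx; rfl
  | succ m ih =>
    intro x hx j hj
    rw [gl, List.mem_append] at hx
    rcases hx with hx | hx
    · exact ih x hx j (by omega)
    · simp only [List.mem_map, List.mem_reverse] at hx
      obtain ⟨y, hy, rfl⟩ := hx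
      rw [Function.update_apply, if_neg (by omega)]
      exact ih y hy j (by omega)

theorem gl_getLast (m : ℕ) :
    (gl (m + 1)).getLast? = some (Function.update (fun _ => false) m true) := by
  rw [gl, List.getLast?_append_of_ne_nil _ (by simp [gl_ne_nil m]),
    List.getLast?_map, List.getLast?_reverse, gl_head]
  rfl

theorem gw_lt {m : ℕ} : ∀ i ∈ gw m, i < m := by
  induction m with
  | zero => simp [gw]
  | succ m ih =>
    intro i hi
    simp only [gw, List.mem_append, List.mem_cons, List.mem_reverse] at hi
    rcases hi with h | rfl | h
    · exact (ih i h).trans (Nat.lt_succ_self m)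
    · exact Nat.lt_succ_self i
    · exact (ih i h).trans (Nat.lt_succ_self m)

theorem gl_nodup (m : ℕ) : (gl m).Nodup := by
  induction m with
  | zero => simp [gl]
  | succ m ih =>
    rw [gl]
    refine List.Nodup.append ih ?_ ?_
    · refine List.Nodup.map_on ?_ (List.nodup_reverse.mpr ih)
      intro x hx y hy hxy
      rw [List.mem_reverse] at hx hy
      funext j
      rcases eq_or_ne j m with rfl | hj
      · rw [gl_support x hx j le_rfl, gl_support y hy j le_rfl]
      · have := congrFun hxy j
        simpa [Function.update_apply, hj] using this
    · intro a ha hb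
      simp only [List.mem_map, List.mem_reverse] at hb
      obtain ⟨y, _, rfl⟩ := hb
      have : Function.update y m true m = false := gl_support _ ha m le_rfl
      simp at this

theorem gl_steps (m : ℕ) : Steps (gl m) (gw m) := by
  induction m with
  | zero => trivial
  | succ m ih =>
    rw [gl, gw]
    have hmap : Steps ((gl m).reverse.map (fun x => Function.update x m true))
        ((gw m).reverse.map id) := by
      refine steps_map _ id (steps_reverse ih) ?_
      intro x i hi
      rw [List.mem_reverse] at hi
      have him : i ≠ m := Nat.ne_of_lt (gw_lt i hi)
      funext j
      rcases eq_or_ne j m with rfl | hj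
      · simp [Function.update_apply, him, Ne.symm him]
      · rcases eq_or_ne j i with rfl | hji
        · simp [Function.update_apply, him, hj]
        · simp [Function.update_apply, hj, hji]
    rw [List.map_id] at hmap
    obtain ⟨a, ha⟩ : ∃ a, (gl m).getLast? = some a := by
      cases h : (gl m).getLast? with
      | none => exact absurd (List.getLast?_eq_none_iff.mp h) (gl_ne_nil m)
      | some a => exact ⟨a, rfl⟩
    have ham : a m = false :=
      gl_support a (List.mem_of_getLast? ha) m le_rfl
    refine steps_append (b := Function.update a m true) ih hmap ha ?_ ?_
    · rw [List.head?_map, List.head?_reverse, ha]; rfl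
    · rw [ham]
      rfl

theorem gw_count (m : ℕ) : (gw (m + 1)).count 0 = 2 ^ m := by
  induction m with
  | zero => rfl
  | succ m ih =>
    rw [show gw (m + 1 + 1) = gw (m + 1) ++ (m + 1) :: (gw (m + 1)).reverse from rfl,
      List.count_append, List.count_cons, List.count_reverse, ih]
    have : (m + 1 : ℕ) ≠ 0 := by omega
    simp only [beq_iff_eq, this, if_false]
    rw [pow_succ]
    omega

end PathLB

namespace PathLB

theorem length_eq_sum_count {n : ℕ} (W : List (Fin n)) :
    ∑ i : Fin n, W.count i = W.length := by
  induction W with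
  | nil => simp
  | cons a W ih =>
    simp only [List.count_cons, List.length_cons, Finset.sum_add_distrib, ih]
    congr 1
    simp [beq_iff_eq, Finset.sum_ite_eq]

/-- For every coordinate `i` there is a path word with `2^(n-1)` occurrences of `i`. -/
theorem exists_path_word (n : ℕ) (h0 : 0 < n) (i : Fin n) :
    ∃ w : List (Fin n), IsPathWord n w ∧ w.count i = 2 ^ (n - 1) := by
  set toFin : ℕ → Fin n := fun j => ⟨j % n, Nat.mod_lt j h0⟩ with htoFin
  set res : (ℕ → Bool) → (Fin n → Bool) := fun x j => x j.val with hres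
  -- step 1: transfer the Gray code to `Fin n`
  have hsteps1 : Steps ((gl n).map res) ((gw n).map toFin) := by
    refine steps_map res toFin (gl_steps n) ?_
    intro x j hj
    have hjn : j < n := gw_lt j hj
    funext k
    have hmod : j % n = j := Nat.mod_eq_of_lt hjn
    have htf : toFin j = ⟨j, hjn⟩ := by simp [htoFin, hmod]
    rw [htf]
    simp only [hres, Function.update_apply]
    rcases eq_or_ne k (⟨j, hjn⟩ : Fin n) with rfl | hk
    · simp
    · have : (k : ℕ) ≠ j := by
        intro hkj; exact hk (Fin.ext hkj)
      simp [this, hk]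
  have hnd1 : ((gl n).map res).Nodup := by
    refine List.Nodup.map_on ?_ (gl_nodup n)
    intro x hx y hy hxy
    funext j
    rcases lt_or_ge j n with hj | hj
    · exact congrFun hxy ⟨j, hj⟩
    · rw [gl_support x hx j hj, gl_support y hy j hj]
  -- step 2: permute coordinates by a swap
  set z : Fin n := ⟨0, h0⟩ with hz
  set σ : Equiv.Perm (Fin n) := Equiv.swap z i with hσ
  set Fp : (Fin n → Bool) → (Fin n → Bool) := fun x => x ∘ σ.symm with hFp
  have hsteps2 : Steps (((gl n).map res).map Fp) ((((gw n).map toFin)).map σ) := by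
    refine steps_map Fp σ hsteps1 ?_
    intro x j _
    funext k
    simp only [hFp, Function.comp_apply, Function.update_apply, Equiv.symm_apply_eq]
    rcases eq_or_ne k (σ j) with rfl | hk
    · simp
    · simp [hk]
  have hnd2 : (((gl n).map res).map Fp).Nodup := by
    refine List.Nodup.map ?_ hnd1
    intro x y hxy
    funext k
    have := congrFun hxy (σ k)
    simpa [hFp] using this
  refine ⟨(((gw n).map toFin)).map σ, isPathWord_of hsteps2 hnd2, ?_⟩
  -- counting
  have hcz : ((gw n).map toFin).count z = 2 ^ (n - 1) := by
    have key : ∀ l : List ℕ, (∀ j ∈ l, j < n) → (l.map toFin).count z = l.count 0 := by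
      intro l
      induction l with
      | nil => simp
      | cons a l ih =>
        intro hl
        have han : a < n := hl a List.mem_cons_self
        rw [List.map_cons, List.count_cons, List.count_cons,
          ih (fun j hj => hl j (List.mem_cons_of_mem _ hj))]
        congr 1
        have hmod : a % n = a := Nat.mod_eq_of_lt han
        by_cases ha : a = 0
        · subst ha; simp [htoFin, hz, Nat.zero_mod]
        · have : toFin a ≠ z := by
            intro hEq
            apply ha
            have := congrArg Fin.val hEq
            simpa [htoFin, hz, hmod] using this
          simp [this, ha]
    have := key (gw n) (fun j hj => gw_lt j hj)
    rw [this]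
    have hn1 : n = (n - 1) + 1 := by omega
    conv_lhs => rw [hn1]
    rw [gw_count]
  have hσz : σ z = i := Equiv.swap_apply_left z i
  rw [← hσz, List.count_map_of_injective _ σ σ.injective, hcz]

end PathLB

/-- every `n`-path-universal word has length at least `n * 2^(n-1)`. -/
theorem pathUniversal_length_lower_bound (n : ℕ) (hn : 1 ≤ n)
    (W : List (Fin n)) (hW : PathUniversal n W) :
    n * 2 ^ (n - 1) ≤ W.length := by
  have key : ∀ i : Fin n, 2 ^ (n - 1) ≤ W.count i := by
    intro i
    obtain ⟨w, hw, hcount⟩ := PathLB.exists_path_word n hn i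
    have := (hW w hw).count_le i
    omega
  calc n * 2 ^ (n - 1) = ∑ _i : Fin n, 2 ^ (n - 1) := by
        rw [Finset.sum_const, Finset.card_univ, Fintype.card_fin, smul_eq_mul]
    _ ≤ ∑ i : Fin n, W.count i := Finset.sum_le_sum fun i _ => key i
    _ = W.length := PathLB.length_eq_sum_count W
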